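/- For every real s > 3/2, Σ'_{i,j,k∈ℤ} (ij + ik − 2jk)/(i² + j² + k² − (2/3)(ij + ik + jk))^{s+1} = 0, where the sum is over all integer triples (i,j,k) ≠ (0,0,0). -/

import Mathlib

open Finset

abbrev M3 (x : ℤ × ℤ × ℤ) : ℕ := max x.1.natAbs (max x.2.1.natAbs x.2.2.natAbs)

lemma mem_box3 {n : ℕ} {x : ℤ × ℤ × ℤ} : x ∈ box n ↔ M3 x = n := by
  cases n with
  | zero =>
    simp [Prod.ext_iff, M3, Int.natAbs_eq_zero]
    
  | succ n =>
    rw [box_succ_eq_sdiff, Finset.mem_sdiff, Finset.mem_Icc, Finset.mem_Icc]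
    simp only [Prod.le_def, Prod.fst_natCast, Prod.snd_natCast, Prod.fst_neg, Prod.snd_neg, M3]
    push_cast
    omega


lemma existsUnique_mem_box3 (x : ℤ × ℤ × ℤ) : ∃! n : ℕ, x ∈ box n := by
  use M3 x
  simp [mem_box3]

lemma card_box3 (n : ℕ) (hn : n ≠ 0) :
    #(box n : Finset (ℤ × ℤ × ℤ)) ≤ 27 * n ^ 2 := by
  obtain ⟨m, rfl⟩ := Nat.exists_eq_succ_of_ne_zero hn
  have h := box_succ_disjUnion (α := ℤ × ℤ × ℤ) m
  have hcard := congrArg Finset.card h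
  rw [Finset.card_disjUnion] at hcard
  have hIcc : ∀ a : ℕ, #(Finset.Icc (-(a : ℤ × ℤ × ℤ)) (a : ℤ × ℤ × ℤ)) = (2 * a + 1) ^ 3 := by
    intro a
    rw [Finset.card_Icc_prod, Finset.card_Icc_prod]
    simp only [Prod.fst_natCast, Prod.snd_natCast, Prod.fst_neg, Prod.snd_neg, Int.card_Icc]
    have h1 : ((a : ℤ) + 1 - -(a : ℤ)).toNat = 2 * a + 1 := by omega
    rw [h1]; ring
  rw [hIcc, hIcc] at hcard
  have hs : (2 * m.succ + 1) ^ 3 = (2 * m + 1) ^ 3 + (24 * m ^ 2 + 48 * m + 26) := by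
    simp [Nat.succ_eq_add_one]; ring
  have : #(box (m + 1) : Finset (ℤ × ℤ × ℤ)) = 24 * m ^ 2 + 48 * m + 26 := by omega
  rw [this]
  nlinarith [m.zero_le]

lemma summable_M3_rpow {k : ℝ} (hk : 3 < k) :
    Summable fun x : ℤ × ℤ × ℤ ↦ (M3 x : ℝ) ^ (-k) := by
  rw [summable_partition _ existsUnique_mem_box3]
  · refine ⟨fun n ↦ (hasSum_fintype (β := box (α := ℤ × ℤ × ℤ) n) _).summable, ?_⟩
    suffices Summable fun n : ℕ ↦ ∑' (_ : box (α := ℤ × ℤ × ℤ) n), (n : ℝ) ^ (-k) by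
      refine this.congr fun n ↦ tsum_congr fun p ↦ ?_
      rw [mem_box3.mp p.2]
    simp only [tsum_fintype, univ_eq_attach, sum_const, card_attach, nsmul_eq_mul]
    apply ((Real.summable_nat_rpow.mpr (by linarith : 2 - k < -1)).mul_left
      27).of_norm_bounded_eventually_nat
    filter_upwards [Filter.eventually_gt_atTop 0] with n hn
    rw [Real.norm_of_nonneg (by positivity)]
    calc (#(box n : Finset (ℤ × ℤ × ℤ)) : ℝ) * (n : ℝ) ^ (-k)
        ≤ (27 * n ^ 2 : ℕ) * (n : ℝ) ^ (-k) := by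
          gcongr
          exact_mod_cast card_box3 n hn.ne'
      _ = 27 * (n : ℝ) ^ (2 - k) := by
          rw [sub_eq_add_neg, Real.rpow_add (by exact_mod_cast hn),
            show ((2 : ℝ)) = ((2 : ℕ) : ℝ) by norm_cast, Real.rpow_natCast]
          push_cast
          ring
  · exact fun n ↦ Real.rpow_nonneg (Nat.cast_nonneg _) _

noncomputable def Q3 (p : ℤ × ℤ × ℤ) : ℝ :=
  (p.1 : ℝ)^2 + (p.2.1 : ℝ)^2 + (p.2.2 : ℝ)^2
    - 2/3 * ((p.1 : ℝ) * (p.2.1 : ℝ) + (p.1 : ℝ) * (p.2.2 : ℝ) + (p.2.1 : ℝ) * (p.2.2 : ℝ))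

lemma M3_sq_le (p : ℤ × ℤ × ℤ) :
    ((M3 p : ℝ))^2 ≤ (p.1 : ℝ)^2 + (p.2.1 : ℝ)^2 + (p.2.2 : ℝ)^2 := by
  have cast_sq : ∀ a : ℤ, ((a.natAbs : ℝ))^2 = (a : ℝ)^2 := by
    intro a
    rw [Nat.cast_natAbs]; push_cast [sq_abs]; ring
  have h1 : (p.1 : ℝ)^2 ≥ 0 := sq_nonneg _
  have h2 : (p.2.1 : ℝ)^2 ≥ 0 := sq_nonneg _
  have h3 : (p.2.2 : ℝ)^2 ≥ 0 := sq_nonneg _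
  rcases max_choice p.1.natAbs (max p.2.1.natAbs p.2.2.natAbs) with h | h
  · rw [show (M3 p) = p.1.natAbs from h, cast_sq]; linarith
  · rcases max_choice p.2.1.natAbs p.2.2.natAbs with h' | h'
    · rw [show (M3 p) = p.2.1.natAbs from h.trans h', cast_sq]; linarith
    · rw [show (M3 p) = p.2.2.natAbs from h.trans h', cast_sq]; linarith

lemma Q3_ge (p : ℤ × ℤ × ℤ) : ((M3 p : ℝ))^2 / 3 ≤ Q3 p := by
  have h := M3_sq_le p
  have e1 := sq_nonneg ((p.1 : ℝ) - (p.2.1 : ℝ))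
  have e2 := sq_nonneg ((p.1 : ℝ) - (p.2.2 : ℝ))
  have e3 := sq_nonneg ((p.2.1 : ℝ) - (p.2.2 : ℝ))
  unfold Q3
  nlinarith

lemma M3_pos {p : ℤ × ℤ × ℤ} (hp : p ≠ 0) : 0 < M3 p := by
  rcases Nat.eq_zero_or_pos (M3 p) with h | h
  · exfalso
    apply hp
    have := h
    simp only [M3, Nat.max_eq_zero_iff, Int.natAbs_eq_zero] at this
    exact Prod.ext this.1 (Prod.ext this.2.1 this.2.2)
  · exact h

lemma numer_bound (p : ℤ × ℤ × ℤ) :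
    |((p.1 * p.2.1 + p.1 * p.2.2 - 2 * p.2.1 * p.2.2 : ℤ) : ℝ)| ≤ 4 * ((M3 p : ℝ))^2 := by
  set M : ℝ := (M3 p : ℝ) with hM
  have habs : ∀ a : ℤ, |(a : ℝ)| = (a.natAbs : ℝ) := by
    intro a; rw [Nat.cast_natAbs]; push_cast; ring
  have hi : |(p.1 : ℝ)| ≤ M := by rw [habs, hM]; exact_mod_cast le_max_left _ _
  have hj : |(p.2.1 : ℝ)| ≤ M := by
    rw [habs, hM]; exact_mod_cast (le_max_left _ _).trans (le_max_right _ _)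
  have hk : |(p.2.2 : ℝ)| ≤ M := by
    rw [habs, hM]; exact_mod_cast (le_max_right _ _).trans (le_max_right _ _)
  have hM0 : 0 ≤ M := by positivity
  have hij : |(p.1 : ℝ) * (p.2.1 : ℝ)| ≤ M^2 := by
    rw [abs_mul, sq]; exact mul_le_mul hi hj (abs_nonneg _) hM0
  have hik : |(p.1 : ℝ) * (p.2.2 : ℝ)| ≤ M^2 := by
    rw [abs_mul, sq]; exact mul_le_mul hi hk (abs_nonneg _) hM0
  have hjk : |(p.2.1 : ℝ) * (p.2.2 : ℝ)| ≤ M^2 := by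
    rw [abs_mul, sq]; exact mul_le_mul hj hk (abs_nonneg _) hM0
  obtain ⟨a1, a2⟩ := abs_le.mp hij
  obtain ⟨b1, b2⟩ := abs_le.mp hik
  obtain ⟨c1, c2⟩ := abs_le.mp hjk
  rw [abs_le]
  push_cast
  constructor <;> nlinarith

lemma f_bound {s : ℝ} (hs : s > 3/2) {p : ℤ × ℤ × ℤ} (hp : p ≠ 0) :
    |((p.1 * p.2.1 + p.1 * p.2.2 - 2 * p.2.1 * p.2.2 : ℤ) : ℝ) / Q3 p ^ (s + 1)|
      ≤ 4 * 3 ^ (s + 1) * ((M3 p : ℝ)) ^ (-(2 * s)) := by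
  set M : ℝ := (M3 p : ℝ) with hMdef
  have hM : 0 < M := by rw [hMdef]; exact_mod_cast M3_pos hp
  have hQ : M ^ 2 / 3 ≤ Q3 p := Q3_ge p
  have hQpos : 0 < Q3 p := lt_of_lt_of_le (by positivity) hQ
  have hden : (M ^ 2 / 3) ^ (s + 1) ≤ Q3 p ^ (s + 1) :=
    Real.rpow_le_rpow (by positivity) hQ (by linarith)
  have hdenpos : (0:ℝ) < (M ^ 2 / 3) ^ (s + 1) := Real.rpow_pos_of_pos (by positivity) _
  rw [abs_div, abs_of_pos (Real.rpow_pos_of_pos hQpos _)]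
  calc |((p.1 * p.2.1 + p.1 * p.2.2 - 2 * p.2.1 * p.2.2 : ℤ) : ℝ)| / Q3 p ^ (s + 1)
      ≤ (4 * M ^ 2) / ((M ^ 2 / 3) ^ (s + 1)) :=
        div_le_div₀ (by positivity) (numer_bound p) hdenpos hden
    _ = 4 * 3 ^ (s + 1) * M ^ (-(2 * s)) := by
        rw [Real.div_rpow (by positivity) (by norm_num : (0:ℝ) ≤ 3)]
        rw [← Real.rpow_natCast M 2, ← Real.rpow_mul hM.le]
        rw [div_div_eq_mul_div, Real.rpow_neg hM.le]
        rw [show ((2:ℕ):ℝ) * (s + 1) = 2 * s + 2 by push_cast; ring,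
          Real.rpow_add hM, Real.rpow_natCast]
        have h1 : M ^ (2 * s) ≠ 0 := (Real.rpow_pos_of_pos hM _).ne'
        have h2 : (M:ℝ) ^ (2:ℕ) ≠ 0 := by positivity
        field_simp
        ring
        norm_cast

def cyc3 : {p : ℤ × ℤ × ℤ // p ≠ 0} ≃ {p : ℤ × ℤ × ℤ // p ≠ 0} where
  toFun q := ⟨(q.1.2.1, q.1.2.2, q.1.1), by
    intro h
    apply q.2
    rw [Prod.ext_iff, Prod.ext_iff] at h ⊢
    exact ⟨h.2.2, h.1, h.2.1⟩⟩
  invFun q := ⟨(q.1.2.2, q.1.1, q.1.2.1), by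
    intro h
    apply q.2
    rw [Prod.ext_iff, Prod.ext_iff] at h ⊢
    exact ⟨h.2.1, h.2.2, h.1⟩⟩
  left_inv q := rfl
  right_inv q := rfl

lemma summable_f {s : ℝ} (hs : s > 3/2) :
    Summable fun p : {p : ℤ × ℤ × ℤ // p ≠ 0} ↦
      ((p.1.1 * p.1.2.1 + p.1.1 * p.1.2.2 - 2 * p.1.2.1 * p.1.2.2 : ℤ) : ℝ) / Q3 p.1 ^ (s + 1) := by
  have h2s : (3:ℝ) < 2 * s := by linarith
  have hg : Summable fun p : {p : ℤ × ℤ × ℤ // p ≠ 0} ↦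
      4 * 3 ^ (s + 1) * ((M3 p.1 : ℝ)) ^ (-(2 * s)) :=
    (((summable_M3_rpow h2s).subtype _).mul_left _)
  apply hg.of_norm_bounded
  intro p
  exact f_bound hs p.2

set_option maxHeartbeats 1000000 in
/-- For every real `s > 3/2`,
`Σ'_{(i,j,k)≠(0,0,0)} (ij + ik − 2jk)/(i² + j² + k² − (2/3)(ij + ik + jk))^{s+1} = 0`. -/
theorem bcc_odd_sum_vanishes (s : ℝ) (hs : s > 3/2) :
    ∑' p : {p : ℤ × ℤ × ℤ // p ≠ 0},
      ((p.1.1 * p.1.2.1 + p.1.1 * p.1.2.2 - 2 * p.1.2.1 * p.1.2.2 : ℤ) : ℝ) /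
        ((p.1.1 : ℝ)^2 + (p.1.2.1 : ℝ)^2 + (p.1.2.2 : ℝ)^2
          - 2/3 * ((p.1.1 : ℝ) * (p.1.2.1 : ℝ) + (p.1.1 : ℝ) * (p.1.2.2 : ℝ)
            + (p.1.2.1 : ℝ) * (p.1.2.2 : ℝ))) ^ (s + 1) = 0 := by
  let f : {p : ℤ × ℤ × ℤ // p ≠ 0} → ℝ := fun p ↦
    ((p.1.1 * p.1.2.1 + p.1.1 * p.1.2.2 - 2 * p.1.2.1 * p.1.2.2 : ℤ) : ℝ) / Q3 p.1 ^ (s + 1)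
  have hsum : Summable f := summable_f hs
  have hsum1 : Summable (f ∘ cyc3) := (Equiv.summable_iff cyc3).mpr hsum
  have hsum2 : Summable (f ∘ cyc3 ∘ cyc3) := (Equiv.summable_iff cyc3).mpr hsum1
  have t1 : ∑' p, (f ∘ cyc3) p = ∑' p, f p := cyc3.tsum_eq f
  have t2 : ∑' p, (f ∘ cyc3 ∘ cyc3) p = ∑' p, (f ∘ cyc3) p := cyc3.tsum_eq (f ∘ cyc3)
  have key : ∀ p, f p + ((f ∘ cyc3) p + (f ∘ cyc3 ∘ cyc3) p) = 0 := by
    rintro ⟨⟨i, j, k⟩, hp⟩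
    show ((i * j + i * k - 2 * j * k : ℤ) : ℝ) / Q3 (i, j, k) ^ (s + 1)
        + (((j * k + j * i - 2 * k * i : ℤ) : ℝ) / Q3 (j, k, i) ^ (s + 1)
          + ((k * i + k * j - 2 * i * j : ℤ) : ℝ) / Q3 (k, i, j) ^ (s + 1)) = 0
    have hD1 : Q3 (j, k, i) = Q3 (i, j, k) := by unfold Q3; push_cast; ring
    have hD2 : Q3 (k, i, j) = Q3 (i, j, k) := by unfold Q3; push_cast; ring
    rw [hD1, hD2, ← add_div, ← add_div]
    have hnum : ((i * j + i * k - 2 * j * k : ℤ) : ℝ)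
        + (((j * k + j * i - 2 * k * i : ℤ) : ℝ) + ((k * i + k * j - 2 * i * j : ℤ) : ℝ)) = 0 := by
      push_cast; ring
    rw [hnum, zero_div]
  have hz : ∑' p, (f p + ((f ∘ cyc3) p + (f ∘ cyc3 ∘ cyc3) p)) = 0 := by
    simp only [key, tsum_zero]
  rw [Summable.tsum_add hsum (hsum1.add hsum2), Summable.tsum_add hsum1 hsum2, t2, t1] at hz
  have : ∑' p, f p = 0 := by linarith
  exact this
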